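/- Let θ₁, θ₂ be nonzero real numbers and suppose T : 𝔻 → 𝔻 is a homeomorphism of the open unit disc such that T(e^{i θ₁ t} z) = e^{i θ₂ t} T(z) for all t ≥ 0 and all z ∈ 𝔻. Then θ₂/θ₁ ∈ {1, −1}, i.e. |θ₁| = |θ₂|. -/

import Mathlib

open Complex

lemma exp_full (θ : ℝ) (hθ : θ ≠ 0) :
    Complex.exp ((θ : ℂ) * ((2*Real.pi/|θ| : ℝ) : ℂ) * Complex.I) = 1 := by
  have hne : |θ| ≠ 0 := abs_ne_zero.mpr hθ
  have key : (θ : ℂ) * ((2*Real.pi/|θ| : ℝ) : ℂ) * Complex.I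
      = ((θ * (2*Real.pi/|θ|) : ℝ) : ℂ) * Complex.I := by push_cast; ring
  rcases abs_cases θ with ⟨h1, _⟩ | ⟨h1, _⟩
  · have h2 : θ * (2*Real.pi/|θ|) = 2*Real.pi := by
      rw [h1]; field_simp
    rw [key, h2]
    have : ((2*Real.pi : ℝ) : ℂ) * Complex.I = ((1:ℤ):ℂ) * (2*Real.pi*Complex.I) := by
      push_cast; ring
    rw [this, Complex.exp_int_mul_two_pi_mul_I]
  · have h2 : θ * (2*Real.pi/|θ|) = -(2*Real.pi) := by
      rw [h1]; field_simp
    rw [key, h2]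
    have : ((-(2*Real.pi) : ℝ) : ℂ) * Complex.I = ((-1:ℤ):ℂ) * (2*Real.pi*Complex.I) := by
      push_cast; ring
    rw [this, Complex.exp_int_mul_two_pi_mul_I]

lemma exp_half (θ : ℝ) (hθ : θ ≠ 0) :
    Complex.exp ((θ : ℂ) * ((Real.pi/|θ| : ℝ) : ℂ) * Complex.I) = -1 := by
  have hne : |θ| ≠ 0 := abs_ne_zero.mpr hθ
  have key : (θ : ℂ) * ((Real.pi/|θ| : ℝ) : ℂ) * Complex.I
      = ((θ * (Real.pi/|θ|) : ℝ) : ℂ) * Complex.I := by push_cast; ring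
  rcases abs_cases θ with ⟨h1, _⟩ | ⟨h1, _⟩
  · have h2 : θ * (Real.pi/|θ|) = Real.pi := by rw [h1]; field_simp
    rw [key, h2, Complex.exp_pi_mul_I]
  · have h2 : θ * (Real.pi/|θ|) = -Real.pi := by
      rw [h1]; field_simp
    rw [key, h2]
    have : ((-Real.pi : ℝ) : ℂ) * Complex.I = -((Real.pi:ℂ) * Complex.I) := by
      push_cast; ring
    rw [this, Complex.exp_neg, Complex.exp_pi_mul_I]
    norm_num

/-- From `exp (θ t I) = 1` extract `θ * t = n * (2π)` in ℝ. -/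
lemma real_of_exp_one {θ t : ℝ} (h : Complex.exp ((θ : ℂ) * (t : ℂ) * Complex.I) = 1) :
    ∃ n : ℤ, θ * t = n * (2 * Real.pi) := by
  rw [Complex.exp_eq_one_iff] at h
  obtain ⟨n, hn⟩ := h
  refine ⟨n, ?_⟩
  have hI : (Complex.I : ℂ) ≠ 0 := Complex.I_ne_zero
  have : ((θ * t : ℝ) : ℂ) = ((n * (2 * Real.pi) : ℝ) : ℂ) := by
    apply mul_right_cancel₀ hI
    push_cast
    linear_combination hn
  exact_mod_cast this

/-- If `θ₁, θ₂` are nonzero reals and `T` is a homeomorphism of the open unit disc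
with `T(e^{iθ₁ t} z) = e^{iθ₂ t} T(z)` for all `t ≥ 0` and `z` in the disc,
then `θ₂/θ₁ = ±1`, i.e. `|θ₁| = |θ₂|`. -/
theorem stmt3 (θ₁ θ₂ : ℝ) (hθ₁ : θ₁ ≠ 0) (hθ₂ : θ₂ ≠ 0)
    (T : {z : ℂ // ‖z‖ < 1} ≃ₜ {z : ℂ // ‖z‖ < 1})
    (hT : ∀ t : ℝ, 0 ≤ t → ∀ z : {z : ℂ // ‖z‖ < 1},
      ∀ hz : ‖Complex.exp (θ₁ * t * Complex.I) * (z : ℂ)‖ < 1,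
        (T ⟨Complex.exp (θ₁ * t * Complex.I) * (z : ℂ), hz⟩ : ℂ)
          = Complex.exp (θ₂ * t * Complex.I) * (T z : ℂ)) :
    θ₂ / θ₁ = 1 ∨ θ₂ / θ₁ = -1 := by
  have hπ : (0:ℝ) < Real.pi := Real.pi_pos
  have ha1 : (0:ℝ) < |θ₁| := abs_pos.2 hθ₁
  have ha2 : (0:ℝ) < |θ₂| := abs_pos.2 hθ₂
  have h01 : ‖(0 : ℂ)‖ < 1 := by simp
  have hhalf : ‖(1/2 : ℂ)‖ < 1 := by
    rw [norm_div]; norm_num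
  have habs_exp : ∀ t : ℝ, ‖Complex.exp ((θ₁:ℂ) * (t:ℂ) * Complex.I)‖ = 1 := by
    intro t
    rw [show ((θ₁:ℂ) * (t:ℂ) * Complex.I) = ((θ₁ * t : ℝ) : ℂ) * Complex.I by push_cast; ring]
    exact Complex.norm_exp_ofReal_mul_I _
  set zero : {z : ℂ // ‖z‖ < 1} := ⟨0, h01⟩ with hzero
  set w₀ : {z : ℂ // ‖z‖ < 1} := ⟨(1/2 : ℂ), hhalf⟩ with hw₀
  -- Step 1: T 0 = 0
  have hT0 : (T zero : ℂ) = 0 := by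
    set t := Real.pi / |θ₂| with htdef
    have ht : 0 ≤ t := le_of_lt (by positivity)
    have hz : ‖Complex.exp (θ₁ * t * Complex.I) * (zero : ℂ)‖ < 1 := by
      simp [hzero]
    have h := hT t ht zero hz
    have hz0 : (⟨Complex.exp (θ₁ * t * Complex.I) * (zero : ℂ), hz⟩ :
        {z : ℂ // ‖z‖ < 1}) = zero := by
      apply Subtype.ext
      show Complex.exp (θ₁ * t * Complex.I) * (zero : ℂ) = (zero : ℂ)
      simp [hzero]
    have hcongr : ((T ⟨Complex.exp (θ₁ * t * Complex.I) * (zero : ℂ), hz⟩ : _) : ℂ)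
        = (T zero : ℂ) := by rw [hz0]
    rw [hcongr] at h
    have he : Complex.exp ((θ₂:ℂ) * (t:ℂ) * Complex.I) = -1 := exp_half θ₂ hθ₂
    rw [he] at h
    have h2 : (2:ℂ) * (T zero : ℂ) = 0 := by linear_combination h
    exact (mul_eq_zero.mp h2).resolve_left two_ne_zero
  -- the basepoint z₀ with T z₀ = w₀ ≠ 0, and z₀ ≠ 0
  set z₀ : {z : ℂ // ‖z‖ < 1} := T.symm w₀ with hz₀def
  have hTz₀ : T z₀ = w₀ := T.apply_symm_apply w₀
  have hw : (w₀ : ℂ) ≠ 0 := by rw [hw₀]; norm_num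
  have hz₀ne : (z₀ : ℂ) ≠ 0 := by
    intro h0
    have h1 : z₀ = zero := Subtype.ext h0
    rw [h1] at hTz₀
    have h2 : (T zero : ℂ) = (w₀ : ℂ) := by rw [hTz₀]
    rw [hT0] at h2
    exact hw h2.symm
  -- Step 2: θ₂ = n * |θ₁|
  obtain ⟨n, hn⟩ : ∃ n : ℤ, θ₂ = n * |θ₁| := by
    set t := 2 * Real.pi / |θ₁| with htdef
    have ht : 0 ≤ t := le_of_lt (by positivity)
    have he : Complex.exp ((θ₁:ℂ) * (t:ℂ) * Complex.I) = 1 := exp_full θ₁ hθ₁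
    have hz : ‖Complex.exp (θ₁ * t * Complex.I) * (z₀ : ℂ)‖ < 1 := by
      rw [norm_mul, habs_exp, one_mul]; exact z₀.2
    have h := hT t ht z₀ hz
    have hz0 : (⟨Complex.exp (θ₁ * t * Complex.I) * (z₀ : ℂ), hz⟩ :
        {z : ℂ // ‖z‖ < 1}) = z₀ := by
      apply Subtype.ext
      show Complex.exp (θ₁ * t * Complex.I) * (z₀ : ℂ) = (z₀ : ℂ)
      rw [he, one_mul]
    have hcongr : ((T ⟨Complex.exp (θ₁ * t * Complex.I) * (z₀ : ℂ), hz⟩ : _) : ℂ)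
        = (T z₀ : ℂ) := by rw [hz0]
    rw [hcongr, hTz₀] at h
    -- h : (w₀ : ℂ) = exp (θ₂ t I) * (w₀ : ℂ)
    have he2 : Complex.exp ((θ₂:ℂ) * (t:ℂ) * Complex.I) = 1 :=
      mul_right_cancel₀ hw (by rw [← h, one_mul])
    obtain ⟨k, hk⟩ := real_of_exp_one he2
    refine ⟨k, ?_⟩
    rw [htdef] at hk
    have h2π : (0:ℝ) < 2 * Real.pi := by positivity
    have hk' : θ₂ * (2 * Real.pi) = (↑k * |θ₁|) * (2 * Real.pi) := by
      have := hk
      field_simp at this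
      nlinarith [this]
    exact mul_right_cancel₀ (ne_of_gt h2π) hk'
  -- Step 3: θ₁ = m * |θ₂|
  obtain ⟨m, hm⟩ : ∃ m : ℤ, θ₁ = m * |θ₂| := by
    set t := 2 * Real.pi / |θ₂| with htdef
    have ht : 0 ≤ t := le_of_lt (by positivity)
    have he : Complex.exp ((θ₂:ℂ) * (t:ℂ) * Complex.I) = 1 := exp_full θ₂ hθ₂
    have hz : ‖Complex.exp (θ₁ * t * Complex.I) * (z₀ : ℂ)‖ < 1 := by
      rw [norm_mul, habs_exp, one_mul]; exact z₀.2
    have h := hT t ht z₀ hz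
    rw [he, hTz₀, one_mul] at h
    -- h : (T ⟨exp(θ₁ t I) * z₀, hz⟩ : ℂ) = (w₀ : ℂ)
    have heq : (⟨Complex.exp (θ₁ * t * Complex.I) * (z₀ : ℂ), hz⟩ :
        {z : ℂ // ‖z‖ < 1}) = z₀ := by
      apply T.injective
      rw [hTz₀]
      exact Subtype.ext h
    have heq' : Complex.exp ((θ₁:ℂ) * (t:ℂ) * Complex.I) * (z₀ : ℂ) = (z₀ : ℂ) :=
      congrArg Subtype.val heq
    have he1 : Complex.exp ((θ₁:ℂ) * (t:ℂ) * Complex.I) = 1 :=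
      mul_right_cancel₀ hz₀ne (by rw [heq', one_mul])
    obtain ⟨k, hk⟩ := real_of_exp_one he1
    refine ⟨k, ?_⟩
    rw [htdef] at hk
    have h2π : (0:ℝ) < 2 * Real.pi := by positivity
    have hk' : θ₁ * (2 * Real.pi) = (↑k * |θ₂|) * (2 * Real.pi) := by
      have := hk
      field_simp at this
      nlinarith [this]
    exact mul_right_cancel₀ (ne_of_gt h2π) hk'
  -- Step 4: arithmetic
  have hn0 : n ≠ 0 := by
    intro h; rw [h] at hn; simp at hn; exact hθ₂ hn
  have hm0 : m ≠ 0 := by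
    intro h; rw [h] at hm; simp at hm; exact hθ₁ hm
  have habs : |θ₂| = |(n:ℝ)| * |θ₁| := by rw [hn, abs_mul, _root_.abs_abs]
  have habs' : |θ₁| = |(m:ℝ)| * |θ₂| := by rw [hm, abs_mul, _root_.abs_abs]
  have hprod : |(n:ℝ)| * |(m:ℝ)| = 1 := by
    have h1 : |θ₂| = |(n:ℝ)| * (|(m:ℝ)| * |θ₂|) := by rw [← habs']; exact habs
    have h2 : (|(n:ℝ)| * |(m:ℝ)| - 1) * |θ₂| = 0 := by ring_nf; nlinarith [h1]
    rcases mul_eq_zero.mp h2 with h3 | h3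
    · linarith
    · exact absurd h3 (ne_of_gt ha2)
  have hn1 : |(n:ℝ)| = 1 := by
    have hnn : (1:ℝ) ≤ |(n:ℝ)| := by
      rw [← Int.cast_abs]; exact_mod_cast Int.one_le_abs hn0
    have hmm : (1:ℝ) ≤ |(m:ℝ)| := by
      rw [← Int.cast_abs]; exact_mod_cast Int.one_le_abs hm0
    nlinarith
  have hfinal : |θ₂| = |θ₁| := by rw [habs, hn1, one_mul]
  have hq : |θ₂ / θ₁| = 1 := by
    rw [abs_div, hfinal, div_self (ne_of_gt ha1)]
  rcases (abs_eq (by norm_num : (0:ℝ) ≤ 1)).mp hq with h | h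
  · exact Or.inl h
  · exact Or.inr h
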